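/- Let F be a field. (i) Every element g ∈ SL₂(F) with g ≠ 1 and (g − 1)² = 0 (i.e., every nontrivial unipotent element) is conjugate in SL₂(F) to u_b for some b ∈ Fˣ. (ii) For b, c ∈ Fˣ, the elements u_b and u_c are conjugate in SL₂(F) if and only if c·b⁻¹ is a square in Fˣ. Hence b ↦ [u_b] induces a bijection from Fˣ/(Fˣ)² onto the set of conjugacy classes of nontrivial unipotent elements of SL₂(F). -/

import Mathlib

open Matrix

variable (F : Type*) [Field F]

/-- The unipotent upper triangular matrix `u_b = !![1, b; 0, 1]` in `SL₂(F)`. -/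
def uMat (b : F) : Matrix.SpecialLinearGroup (Fin 2) F :=
  ⟨!![1, b; 0, 1], by simp [Matrix.det_fin_two_of]⟩

section Aux
variable {F : Type*} [Field F]

def mkSL (a b c d : F) (h : a * d - b * c = 1) : Matrix.SpecialLinearGroup (Fin 2) F :=
  ⟨!![a, b; c, d], by simpa [Matrix.det_fin_two_of] using h⟩

lemma isConj_of_semiconj (m g h : Matrix.SpecialLinearGroup (Fin 2) F)
    (hm : (m : Matrix (Fin 2) (Fin 2) F) * g = (h : Matrix (Fin 2) (Fin 2) F) * m) :
    IsConj g h := by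
  rw [isConj_iff]
  refine ⟨m, mul_inv_eq_iff_eq_mul.mpr (Subtype.ext ?_)⟩
  simpa using hm

lemma part1 (g : Matrix.SpecialLinearGroup (Fin 2) F) (hg : g ≠ 1)
    (hsq : ((g : Matrix (Fin 2) (Fin 2) F) - 1) ^ 2 = 0) :
    ∃ b : Fˣ, IsConj g (uMat F (b : F)) := by
  set A := (g : Matrix (Fin 2) (Fin 2) F) with hA
  have ent : ∀ i j : Fin 2, ((A - 1) ^ 2 : Matrix (Fin 2) (Fin 2) F) i j = 0 := fun i j => by rw [hsq]; rfl
  have e00 : (A 0 0 - 1) * (A 0 0 - 1) + A 0 1 * A 1 0 = 0 := by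
    have := ent 0 0
    simpa [pow_two, Matrix.mul_apply, Fin.sum_univ_two, Matrix.sub_apply, Matrix.one_apply, Matrix.zero_apply] using this
  have e01 : (A 0 0 - 1) * A 0 1 + A 0 1 * (A 1 1 - 1) = 0 := by
    have := ent 0 1
    simpa [pow_two, Matrix.mul_apply, Fin.sum_univ_two, Matrix.sub_apply, Matrix.one_apply, Matrix.zero_apply] using this
  have e10 : A 1 0 * (A 0 0 - 1) + (A 1 1 - 1) * A 1 0 = 0 := by
    have := ent 1 0
    simpa [pow_two, Matrix.mul_apply, Fin.sum_univ_two, Matrix.sub_apply, Matrix.one_apply, Matrix.zero_apply] using this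
  have e11 : A 1 0 * A 0 1 + (A 1 1 - 1) * (A 1 1 - 1) = 0 := by
    have := ent 1 1
    simpa [pow_two, Matrix.mul_apply, Fin.sum_univ_two, Matrix.sub_apply, Matrix.one_apply, Matrix.zero_apply] using this
  set p := A 0 0 - 1 with hp
  set q := A 0 1 with hq
  set r := A 1 0 with hr
  set s := A 1 1 - 1 with hs
  have hps : p + s = 0 := by
    by_contra h
    have hq0 : q = 0 := by
      rcases mul_eq_zero.mp (show q * (p + s) = 0 by linear_combination e01) with h' | h'
      · exact h'
      · exact absurd h' h
    have hr0 : r = 0 := by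
      rcases mul_eq_zero.mp (show (p + s) * r = 0 by linear_combination e10) with h' | h'
      · exact absurd h' h
      · exact h'
    have hp0 : p = 0 := by
      have : p * p = 0 := by linear_combination e00 - r * hq0
      exact pow_eq_zero_iff (n := 2) (by norm_num) |>.mp (by linear_combination this)
    have hs0 : s = 0 := by
      have : s * s = 0 := by linear_combination e11 - q * hr0
      exact pow_eq_zero_iff (n := 2) (by norm_num) |>.mp (by linear_combination this)
    exact h (by rw [hp0, hs0, add_zero])
  by_cases hq0 : q = 0
  · -- then p = 0, s = 0, r ≠ 0
    have hp0 : p = 0 := by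
      have : p * p = 0 := by linear_combination e00 - r * hq0
      exact pow_eq_zero_iff (n := 2) (by norm_num) |>.mp (by linear_combination this)
    have hs0 : s = 0 := by linear_combination hps - hp0
    have hr0 : r ≠ 0 := by
      intro hr0
      apply hg
      apply Subtype.ext
      show A = 1
      ext i j
      fin_cases i <;> fin_cases j
      · show A 0 0 = 1; linear_combination hp0 - hp
      · show A 0 1 = 0; linear_combination hq0 - hq
      · show A 1 0 = 0; linear_combination hr0 - hr
      · show A 1 1 = 1; linear_combination hs0 - hs
    have hdw : (0:F) * 0 - (-1) * 1 = 1 := by norm_num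
    refine ⟨Units.mk0 (-r) (neg_ne_zero.mpr hr0), ?_⟩
    apply isConj_of_semiconj (mkSL 0 (-1) 1 0 hdw)
    show (mkSL (0:F) (-1) 1 0 hdw : Matrix (Fin 2) (Fin 2) F) * A
        = (uMat F (-r) : Matrix (Fin 2) (Fin 2) F) * (mkSL (0:F) (-1) 1 0 hdw : Matrix (Fin 2) (Fin 2) F)
    ext i j
    fin_cases i <;> fin_cases j <;>
      simp [mkSL, uMat, Matrix.mul_apply, Fin.sum_univ_two]
    · rfl
    · linear_combination hs0 - hs
    · linear_combination hp0 - hp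
    · linear_combination hq0 - hq
  · have hdm : (1:F) * 1 - 0 * (p / q) = 1 := by ring
    have ht : (p / q) * q = p := div_mul_cancel₀ p hq0
    have hqq : q * q⁻¹ = 1 := mul_inv_cancel₀ hq0
    refine ⟨Units.mk0 q hq0, ?_⟩
    apply isConj_of_semiconj (mkSL 1 0 (p / q) 1 hdm)
    show (mkSL (1:F) 0 (p / q) 1 hdm : Matrix (Fin 2) (Fin 2) F) * A
        = (uMat F q : Matrix (Fin 2) (Fin 2) F) * (mkSL (1:F) 0 (p / q) 1 hdm : Matrix (Fin 2) (Fin 2) F)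
    ext i j
    fin_cases i <;> fin_cases j <;>
      simp [mkSL, uMat, Matrix.mul_apply, Fin.sum_univ_two]
    · linear_combination -hp - ht
    · rfl
    · linear_combination -(p/q)*hp + (1/q)*e00 - hr - (A 1 0) * hqq
    · linear_combination -(p/q)*hq + ht - hs + hps

lemma part2 (b c : Fˣ) :
    IsConj (uMat F (b : F)) (uMat F (c : F)) ↔ ∃ a : Fˣ, c * b⁻¹ = a ^ 2 := by
  constructor
  · rintro ⟨u, hu⟩
    have hu' : ((u : Matrix.SpecialLinearGroup (Fin 2) F) : Matrix (Fin 2) (Fin 2) F)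
        * (uMat F (b : F) : Matrix (Fin 2) (Fin 2) F)
        = (uMat F (c : F) : Matrix (Fin 2) (Fin 2) F)
        * ((u : Matrix.SpecialLinearGroup (Fin 2) F) : Matrix (Fin 2) (Fin 2) F) := by
      have := congrArg (Subtype.val) hu.eq
      simpa using this
    set m := ((u : Matrix.SpecialLinearGroup (Fin 2) F) : Matrix (Fin 2) (Fin 2) F) with hmdef
    have hdet : m 0 0 * m 1 1 - m 0 1 * m 1 0 = 1 := by
      rw [← Matrix.det_fin_two]
      exact (u : Matrix.SpecialLinearGroup (Fin 2) F).2
    have h00 : m 0 0 * 1 + m 0 1 * 0 = (1 * m 0 0 + (c : F) * m 1 0) := by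
      have := congrFun (congrFun hu' 0) 0
      simpa [uMat, Matrix.mul_apply, Fin.sum_univ_two] using this
    have h01 : m 0 0 * (b : F) + m 0 1 = m 0 1 + (c : F) * m 1 1 := by
      have := congrFun (congrFun hu' 0) 1
      simpa [uMat, Matrix.mul_apply, Fin.sum_univ_two] using this
    have hm10 : m 1 0 = 0 := by
      have hc : (c : F) ≠ 0 := c.ne_zero
      have : (c : F) * m 1 0 = 0 := by linear_combination -h00
      exact (mul_eq_zero.mp this).resolve_left hc
    have hx : m 0 0 ≠ 0 := by
      intro h
      have : (0 : F) = 1 := by linear_combination hdet - m 1 1 * h + m 0 1 * hm10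
      simp at this
    refine ⟨Units.mk0 (m 0 0) hx, ?_⟩
    ext
    push_cast
    rw [Units.val_mk0]
    field_simp
    -- (c:F) = m00^2 * b
    have h11 : m 0 0 * m 1 1 = 1 := by linear_combination hdet + m 0 1 * hm10
    linear_combination -(m 0 0) * h01 - (c:F) * h11
  · rintro ⟨a, ha⟩
    have hc : (c : F) = (a : F) ^ 2 * (b : F) := by
      have := congrArg (Units.val) ha
      push_cast at this
      field_simp at this
      linear_combination this
    have hdm : (a : F) * (a⁻¹ : Fˣ) - 0 * 0 = 1 := by
      simp
    apply isConj_of_semiconj (mkSL (a : F) 0 0 ((a⁻¹ : Fˣ) : F) hdm)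
    show (mkSL ((a:F)) 0 0 ((a⁻¹ : Fˣ) : F) hdm : Matrix (Fin 2) (Fin 2) F)
        * (uMat F (b : F) : Matrix (Fin 2) (Fin 2) F)
        = (uMat F (c : F) : Matrix (Fin 2) (Fin 2) F)
        * (mkSL ((a:F)) 0 0 ((a⁻¹ : Fˣ) : F) hdm : Matrix (Fin 2) (Fin 2) F)
    ext i j
    fin_cases i <;> fin_cases j <;>
      simp [mkSL, uMat, Matrix.mul_apply, Fin.sum_univ_two]
    · have haa : (a : F) * ((a : F))⁻¹ = 1 := mul_inv_cancel₀ a.ne_zero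
      linear_combination -((a:F))⁻¹ * hc - (a:F) * (b:F) * haa

lemma uMat_ne_one (b : Fˣ) : uMat F (b : F) ≠ 1 := by
  intro h
  have h2 := congrFun (congrFun (congrArg Subtype.val h) 0) 1
  simp [uMat, Matrix.one_apply] at h2

lemma uMat_sq (b : F) : ((uMat F b : Matrix (Fin 2) (Fin 2) F) - 1) ^ 2 = 0 := by
  ext i j
  fin_cases i <;> fin_cases j <;>
    simp [uMat, pow_two, Matrix.mul_apply, Fin.sum_univ_two, Matrix.sub_apply,
      Matrix.one_apply]

lemma part3 :
    ∃ e : (Fˣ ⧸ (powMonoidHom 2 : Fˣ →* Fˣ).range) ≃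
        {q : ConjClasses (Matrix.SpecialLinearGroup (Fin 2) F) //
          ∃ g, q = ConjClasses.mk g ∧ g ≠ 1 ∧ ((g : Matrix (Fin 2) (Fin 2) F) - 1) ^ 2 = 0},
      ∀ b : Fˣ, (e (QuotientGroup.mk b) : ConjClasses (Matrix.SpecialLinearGroup (Fin 2) F)) =
        ConjClasses.mk (uMat F (b : F)) := by
  set S := {q : ConjClasses (Matrix.SpecialLinearGroup (Fin 2) F) //
      ∃ g, q = ConjClasses.mk g ∧ g ≠ 1 ∧ ((g : Matrix (Fin 2) (Fin 2) F) - 1) ^ 2 = 0} with hS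
  let f' : Fˣ → S := fun b =>
    ⟨ConjClasses.mk (uMat F (b : F)), uMat F (b : F), rfl, uMat_ne_one b, uMat_sq _⟩
  have hconj : ∀ x y : Fˣ, (∃ a : Fˣ, y * x⁻¹ = a ^ 2) → f' x = f' y := by
    intro x y h
    apply Subtype.ext
    exact ConjClasses.mk_eq_mk_iff_isConj.mpr ((part2 x y).mpr h)
  have hresp : ∀ x y : Fˣ, (QuotientGroup.leftRel (powMonoidHom 2 : Fˣ →* Fˣ).range) x y → f' x = f' y := by
    intro x y hxy
    have hmem : x⁻¹ * y ∈ (powMonoidHom 2 : Fˣ →* Fˣ).range :=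
      (QuotientGroup.leftRel_apply).mp hxy
    obtain ⟨a, ha⟩ := hmem
    exact hconj x y ⟨a, by rw [mul_comm, ← ha]; rfl⟩
  let f : (Fˣ ⧸ (powMonoidHom 2 : Fˣ →* Fˣ).range) → S := Quotient.lift f' hresp
  have hinj : Function.Injective f := by
    intro x y
    induction x using Quotient.inductionOn with
    | h x =>
    induction y using Quotient.inductionOn with
    | h y =>
    intro hxy
    have h1 : ConjClasses.mk (uMat F (x : F)) = ConjClasses.mk (uMat F (y : F)) :=
      congrArg Subtype.val hxy
    obtain ⟨a, ha⟩ := (part2 x y).mp (ConjClasses.mk_eq_mk_iff_isConj.mp h1)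
    show QuotientGroup.mk x = QuotientGroup.mk y
    rw [QuotientGroup.eq]
    exact ⟨a, by rw [powMonoidHom_apply, ← ha]; exact mul_comm _ _⟩
  have hsurj : Function.Surjective f := by
    rintro ⟨cl, g, rfl, hne, hsq⟩
    obtain ⟨b, hb⟩ := part1 g hne hsq
    refine ⟨QuotientGroup.mk b, ?_⟩
    apply Subtype.ext
    exact (ConjClasses.mk_eq_mk_iff_isConj.mpr hb).symm
  refine ⟨Equiv.ofBijective f ⟨hinj, hsurj⟩, fun b => rfl⟩

end Aux

/-- In `SL₂(F)`: (i) every nontrivial unipotent element is conjugate to some `u_b`, `b ∈ Fˣ`;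
(ii) `u_b` and `u_c` are conjugate iff `c b⁻¹` is a square in `Fˣ`; hence `b ↦ [u_b]` induces a
bijection from `Fˣ/(Fˣ)²` onto the set of conjugacy classes of nontrivial unipotent
elements. -/
theorem sl2_unipotent_conjugacy_classes :
    (∀ g : Matrix.SpecialLinearGroup (Fin 2) F, g ≠ 1 →
      ((g : Matrix (Fin 2) (Fin 2) F) - 1) ^ 2 = 0 →
      ∃ b : Fˣ, IsConj g (uMat F (b : F))) ∧
    (∀ b c : Fˣ, IsConj (uMat F (b : F)) (uMat F (c : F)) ↔ ∃ a : Fˣ, c * b⁻¹ = a ^ 2) ∧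
    (∃ e : (Fˣ ⧸ (powMonoidHom 2 : Fˣ →* Fˣ).range) ≃
        {q : ConjClasses (Matrix.SpecialLinearGroup (Fin 2) F) //
          ∃ g, q = ConjClasses.mk g ∧ g ≠ 1 ∧ ((g : Matrix (Fin 2) (Fin 2) F) - 1) ^ 2 = 0},
      ∀ b : Fˣ, (e (QuotientGroup.mk b) : ConjClasses (Matrix.SpecialLinearGroup (Fin 2) F)) =
        ConjClasses.mk (uMat F (b : F))) := by
  exact ⟨fun g hg hsq => part1 g hg hsq, part2, part3⟩
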